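/- Let E be a semilattice and (X,E,p) a presheaf over E. Then the generalised Munn semigroup T_X, with product given by composing the restrictions of its elements to intersections of principal subpresheaves, is an inverse semigroup: for all e,f ∈ E one has X·e ∩ X·f = X·ef, the inverse of (α,θ) ∈ T_X is (α⁻¹,θ⁻¹), and the idempotents of T_X are exactly the pairs (id_{X·e}, id_{e↓}) for e ∈ E. -/

import Mathlib

/-- A meet-semilattice: a commutative semigroup all of whose elements are idempotent. -/
class MeetSL (E : Type*) extends CommSemigroup E where
  idem : ∀ e : E, e * e = e

/-- The natural partial order on a meet-semilattice: `e ≤ f` iff `e = ef`. -/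
def sle {E : Type*} [MeetSL E] (e f : E) : Prop := e = e * f

/-- The principal order-ideal `e↓ = {h ∈ E : h ≤ e}` of a meet-semilattice. -/
abbrev dOn (E : Type*) [MeetSL E] (e : E) : Type _ := {h : E // sle h e}

/-- A presheaf of sets over a meet-semilattice `E`, viewed as a supported action
`(X, E, p)` of `E` on `X`. -/
structure SPresheaf (X : Type*) (E : Type*) [MeetSL E] where
  act : X → E → X
  p : X → E
  act_act : ∀ x e f, act (act x e) f = act x (e * f)
  act_p : ∀ x, act x (p x) = x
  p_act : ∀ x e, p (act x e) = p x * e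

namespace SPresheaf
variable {X E : Type*} [MeetSL E]

/-- The natural partial order on a presheaf: `x ≤ y` iff `x = y · p(x)`. -/
def xle (P : SPresheaf X E) (x y : X) : Prop := x = P.act y (P.p x)

/-- The underlying set `X · e = {x ∈ X : p(x) ≤ e}` of the principal subpresheaf at `e`. -/
abbrev sub (P : SPresheaf X E) (e : E) : Type _ := {x : X // sle (P.p x) e}

end SPresheaf

/-- An element of the generalised Munn semigroup `T_X` of the presheaf `P`: an isomorphism
`(α, θ)` between the principal subpresheaves `(X·e, e↓)` and `(X·f, f↓)`, i.e. a pair of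
order-isomorphisms with `p(α(x)) = θ(p(x))` for all `x ∈ X·e`. -/
structure MunnElt {X E : Type*} [MeetSL E] (P : SPresheaf X E) where
  e : E
  f : E
  α : P.sub e ≃ P.sub f
  θ : dOn E e ≃ dOn E f
  α_ord : ∀ x y : P.sub e, P.xle x.1 y.1 ↔ P.xle (α x).1 (α y).1
  θ_ord : ∀ a b : dOn E e, sle a.1 b.1 ↔ sle (θ a).1 (θ b).1
  compat : ∀ x : P.sub e, P.p (α x).1 = (θ ⟨P.p x.1, x.2⟩).1

namespace MunnElt
variable {X E : Type*} [MeetSL E] {P : SPresheaf X E}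

/-- The partial-bijection graph of the first component of a Munn element. -/
def maps (t : MunnElt P) (x y : X) : Prop :=
  ∃ h : sle (P.p x) t.e, (t.α ⟨x, h⟩).1 = y

/-- The partial-bijection graph of the second component of a Munn element. -/
def mapsE (t : MunnElt P) (a b : E) : Prop :=
  ∃ h : sle a t.e, (t.θ ⟨a, h⟩).1 = b

end MunnElt

/-- `mul` is the multiplication of the generalised Munn semigroup `T_X`: the product
`mul a b` is obtained by restricting `a` and `b` to the intersection of the relevant
principal subpresheaves and composing (apply `b` first, then `a`). -/
def IsMunnMul {X E : Type*} [MeetSL E] {P : SPresheaf X E}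
    (mul : MunnElt P → MunnElt P → MunnElt P) : Prop :=
  ∀ a b : MunnElt P,
    (∀ x z : X, (mul a b).maps x z ↔ ∃ y, b.maps x y ∧ a.maps y z) ∧
    (∀ h k : E, (mul a b).mapsE h k ↔ ∃ m, b.mapsE h m ∧ a.mapsE m k)

/-- `inv` sends each `(α, θ)` of the generalised Munn semigroup to `(α⁻¹, θ⁻¹)`. -/
def IsMunnInv {X E : Type*} [MeetSL E] {P : SPresheaf X E}
    (inv : MunnElt P → MunnElt P) : Prop :=
  ∀ t : MunnElt P,
    (∀ x y : X, (inv t).maps x y ↔ t.maps y x) ∧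
    (∀ a b : E, (inv t).mapsE a b ↔ t.mapsE b a)

section SleLemmas
variable {E : Type*} [MeetSL E]

theorem sle_refl' (e : E) : sle e e := (MeetSL.idem e).symm

theorem sle_trans' {a b c : E} (h1 : sle a b) (h2 : sle b c) : sle a c := by
  show a = a * c
  rw [h1, mul_assoc, ← h2]

theorem sle_antisymm' {a b : E} (h1 : sle a b) (h2 : sle b a) : a = b := by
  rw [h1, mul_comm a b, ← h2]

theorem sle_mul_left' (a b : E) : sle (a * b) a := by
  show a * b = a * b * a
  rw [mul_assoc, mul_comm b a, ← mul_assoc, MeetSL.idem]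

theorem sle_mul_right' (a b : E) : sle (a * b) b := by
  show a * b = a * b * b
  rw [mul_assoc, MeetSL.idem]

theorem sle_mul' {c a b : E} (h1 : sle c a) (h2 : sle c b) : sle c (a * b) := by
  show c = c * (a * b)
  rw [← mul_assoc, ← h1, ← h2]

end SleLemmas
namespace MunnElt
variable {X E : Type*} [MeetSL E] {P : SPresheaf X E}

theorem maps_fun {t : MunnElt P} {x y z : X} (h1 : t.maps x y) (h2 : t.maps x z) : y = z := by
  obtain ⟨h, rfl⟩ := h1; obtain ⟨h', rfl⟩ := h2; rfl

theorem maps_inj {t : MunnElt P} {x y z : X} (h1 : t.maps x z) (h2 : t.maps y z) : x = y := by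
  obtain ⟨h, e1⟩ := h1; obtain ⟨h', e2⟩ := h2
  have h3 : t.α ⟨x, h⟩ = t.α ⟨y, h'⟩ := Subtype.ext (e1.trans e2.symm)
  exact congrArg Subtype.val ((t.α.injective h3))

theorem mapsE_fun {t : MunnElt P} {x y z : E} (h1 : t.mapsE x y) (h2 : t.mapsE x z) : y = z := by
  obtain ⟨h, rfl⟩ := h1; obtain ⟨h', rfl⟩ := h2; rfl

theorem mapsE_inj {t : MunnElt P} {x y z : E} (h1 : t.mapsE x z) (h2 : t.mapsE y z) : x = y := by
  obtain ⟨h, e1⟩ := h1; obtain ⟨h', e2⟩ := h2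
  have h3 : t.θ ⟨x, h⟩ = t.θ ⟨y, h'⟩ := Subtype.ext (e1.trans e2.symm)
  exact congrArg Subtype.val ((t.θ.injective h3))

theorem theta_top (t : MunnElt P) : (t.θ ⟨t.e, sle_refl' _⟩).1 = t.f := by
  apply sle_antisymm'
  · exact (t.θ _).2
  · have h := (t.θ.symm ⟨t.f, sle_refl' _⟩).2
    have h2 := (t.θ_ord (t.θ.symm ⟨t.f, sle_refl' _⟩) ⟨t.e, sle_refl' _⟩).1 h
    rwa [t.θ.apply_symm_apply] at h2

theorem ext_graph {t s : MunnElt P}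
    (hm : ∀ x y, t.maps x y ↔ s.maps x y)
    (hE : ∀ a b, t.mapsE a b ↔ s.mapsE a b) : t = s := by
  have he : t.e = s.e := by
    apply sle_antisymm'
    · obtain ⟨h, -⟩ := (hE t.e _).1 ⟨sle_refl' _, rfl⟩; exact h
    · obtain ⟨h, -⟩ := (hE s.e _).2 ⟨sle_refl' _, rfl⟩; exact h
  obtain ⟨e, f, α, θ, ao, tho, co⟩ := t
  obtain ⟨e', f', α', θ', ao2, tho2, co2⟩ := s
  simp only at he
  subst he
  have hθv : ∀ (a : E) (h : sle a e) (h' : sle a e), (θ ⟨a, h⟩).1 = (θ' ⟨a, h'⟩).1 := by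
    intro a h h'
    obtain ⟨h'', e''⟩ := (hE a _).1 ⟨h, rfl⟩
    exact e''.symm
  have hαv : ∀ (x : X) (h : sle (P.p x) e) (h' : sle (P.p x) e),
      (α ⟨x, h⟩).1 = (α' ⟨x, h'⟩).1 := by
    intro x h h'
    obtain ⟨h'', e''⟩ := (hm x _).1 ⟨h, rfl⟩
    exact e''.symm
  have hf : f = f' := by
    have h1 : (θ ⟨e, sle_refl' e⟩).1 = f := theta_top (MunnElt.mk e f α θ ao tho co)
    have h2 : (θ' ⟨e, sle_refl' e⟩).1 = f' := theta_top (MunnElt.mk e f' α' θ' ao2 tho2 co2)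
    rw [← h1, ← h2]
    exact hθv e (sle_refl' e) (sle_refl' e)
  subst hf
  have hθ : θ = θ' := Equiv.ext fun a => Subtype.ext (hθv a.1 a.2 a.2)
  have hα : α = α' := Equiv.ext fun x => Subtype.ext (hαv x.1 x.2 x.2)
  subst hθ; subst hα
  rfl

end MunnElt
namespace MunnElt
variable {X E : Type*} [MeetSL E] {P : SPresheaf X E}

/-- Transport of a principal subpresheaf along an equality of indices. -/
def subCongr {e f : E} (h : e = f) : P.sub e ≃ P.sub f where
  toFun x := ⟨x.1, h ▸ x.2⟩
  invFun x := ⟨x.1, h ▸ x.2⟩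
  left_inv x := rfl
  right_inv x := rfl

/-- Transport of a principal ideal along an equality. -/
def dCongr {e f : E} (h : e = f) : dOn E e ≃ dOn E f where
  toFun x := ⟨x.1, h ▸ x.2⟩
  invFun x := ⟨x.1, h ▸ x.2⟩
  left_inv x := rfl
  right_inv x := rfl

/-- Restriction of a Munn element to a principal subpresheaf of its domain. -/
def restrict (t : MunnElt P) (u : dOn E t.e) : MunnElt P where
  e := u.1
  f := (t.θ u).1
  α :=
  { toFun := fun x => ⟨(t.α ⟨x.1, sle_trans' x.2 u.2⟩).1, by
      rw [t.compat ⟨x.1, sle_trans' x.2 u.2⟩]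
      exact (t.θ_ord ⟨P.p x.1, sle_trans' x.2 u.2⟩ u).1 x.2⟩
    invFun := fun y => ⟨(t.α.symm ⟨y.1, sle_trans' y.2 (t.θ u).2⟩).1, by
      have h := t.compat (t.α.symm ⟨y.1, sle_trans' y.2 (t.θ u).2⟩)
      rw [t.α.apply_symm_apply] at h
      refine (t.θ_ord ⟨P.p (t.α.symm ⟨y.1, sle_trans' y.2 (t.θ u).2⟩).1,
        (t.α.symm ⟨y.1, sle_trans' y.2 (t.θ u).2⟩).2⟩ u).2 ?_
      rw [← h]
      exact y.2⟩
    left_inv := fun x => by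
      apply Subtype.ext
      show (t.α.symm (t.α ⟨x.1, sle_trans' x.2 u.2⟩)).1 = x.1
      rw [t.α.symm_apply_apply]
    right_inv := fun y => by
      apply Subtype.ext
      show (t.α (t.α.symm ⟨y.1, sle_trans' y.2 (t.θ u).2⟩)).1 = y.1
      rw [t.α.apply_symm_apply] }
  θ :=
  { toFun := fun a => ⟨(t.θ ⟨a.1, sle_trans' a.2 u.2⟩).1,
      (t.θ_ord ⟨a.1, sle_trans' a.2 u.2⟩ u).1 a.2⟩
    invFun := fun b => ⟨(t.θ.symm ⟨b.1, sle_trans' b.2 (t.θ u).2⟩).1, by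
      refine (t.θ_ord _ u).2 ?_
      rw [t.θ.apply_symm_apply]
      exact b.2⟩
    left_inv := fun a => by
      apply Subtype.ext
      show (t.θ.symm (t.θ ⟨a.1, sle_trans' a.2 u.2⟩)).1 = a.1
      rw [t.θ.symm_apply_apply]
    right_inv := fun b => by
      apply Subtype.ext
      show (t.θ (t.θ.symm ⟨b.1, sle_trans' b.2 (t.θ u).2⟩)).1 = b.1
      rw [t.θ.apply_symm_apply] }
  α_ord x y := by
    exact t.α_ord ⟨x.1, sle_trans' x.2 u.2⟩ ⟨y.1, sle_trans' y.2 u.2⟩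
  θ_ord a b := by
    exact t.θ_ord ⟨a.1, sle_trans' a.2 u.2⟩ ⟨b.1, sle_trans' b.2 u.2⟩
  compat x := by
    exact t.compat ⟨x.1, sle_trans' x.2 u.2⟩

/-- Composition of two Munn elements when the codomain of the second matches the
domain of the first (the second is applied first). -/
def comp (a b : MunnElt P) (h : b.f = a.e) : MunnElt P where
  e := b.e
  f := a.f
  α := b.α.trans ((subCongr h).trans a.α)
  θ := b.θ.trans ((dCongr h).trans a.θ)
  α_ord x y := by
    refine (b.α_ord x y).trans ?_
    exact a.α_ord ((subCongr h) (b.α x)) ((subCongr h) (b.α y))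
  θ_ord x y := by
    refine (b.θ_ord x y).trans ?_
    exact a.θ_ord ((dCongr h) (b.θ x)) ((dCongr h) (b.θ y))
  compat x := by
    show P.p (a.α _).1 = (a.θ _).1
    rw [a.compat]
    exact congrArg (fun z => (a.θ z).1) (Subtype.ext (b.compat x))

/-- Munn multiplication: restrict and compose (second factor applied first). -/
def mul' (a b : MunnElt P) : MunnElt P :=
  comp (a.restrict ⟨b.f * a.e, sle_mul_right' _ _⟩)
       (b.restrict (b.θ.symm ⟨b.f * a.e, sle_mul_left' _ _⟩))
       (by exact congrArg Subtype.val
             (b.θ.apply_symm_apply ⟨b.f * a.e, sle_mul_left' _ _⟩))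

/-- Munn inversion. -/
def inv' (t : MunnElt P) : MunnElt P where
  e := t.f
  f := t.e
  α := t.α.symm
  θ := t.θ.symm
  α_ord x y := by
    have h := (t.α_ord (t.α.symm x) (t.α.symm y)).symm
    rwa [t.α.apply_symm_apply, t.α.apply_symm_apply] at h
  θ_ord a b := by
    have h := (t.θ_ord (t.θ.symm a) (t.θ.symm b)).symm
    rwa [t.θ.apply_symm_apply, t.θ.apply_symm_apply] at h
  compat x := by
    have h := t.compat (t.α.symm x)
    rw [t.α.apply_symm_apply] at h
    have h2 : (⟨P.p x.1, x.2⟩ : dOn E t.f)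
        = t.θ ⟨P.p (t.α.symm x).1, (t.α.symm x).2⟩ := Subtype.ext h
    rw [h2, t.θ.symm_apply_apply]

end MunnElt
namespace MunnElt
variable {X E : Type*} [MeetSL E] {P : SPresheaf X E}

theorem restrict_maps (t : MunnElt P) (u : dOn E t.e) (x y : X) :
    (t.restrict u).maps x y ↔ t.maps x y ∧ sle (P.p x) u.1 := by
  constructor
  · rintro ⟨h, rfl⟩
    exact ⟨⟨sle_trans' h u.2, rfl⟩, h⟩
  · rintro ⟨⟨h, rfl⟩, h2⟩
    exact ⟨h2, rfl⟩

theorem restrict_mapsE (t : MunnElt P) (u : dOn E t.e) (a b : E) :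
    (t.restrict u).mapsE a b ↔ t.mapsE a b ∧ sle a u.1 := by
  constructor
  · rintro ⟨h, rfl⟩
    exact ⟨⟨sle_trans' h u.2, rfl⟩, h⟩
  · rintro ⟨⟨h, rfl⟩, h2⟩
    exact ⟨h2, rfl⟩

theorem comp_maps (a b : MunnElt P) (h : b.f = a.e) (x z : X) :
    (comp a b h).maps x z ↔ ∃ y, b.maps x y ∧ a.maps y z := by
  constructor
  · rintro ⟨hx, rfl⟩
    refine ⟨(b.α ⟨x, hx⟩).1, ⟨hx, rfl⟩, h ▸ (b.α ⟨x, hx⟩).2, ?_⟩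
    rfl
  · rintro ⟨y, ⟨h1, v1⟩, ⟨h2, v2⟩⟩
    refine ⟨h1, ?_⟩
    show (a.α ((subCongr h) (b.α ⟨x, h1⟩))).1 = z
    have : (subCongr h) (b.α ⟨x, h1⟩) = ⟨y, h2⟩ := Subtype.ext v1
    rw [this]
    exact v2

theorem comp_mapsE (a b : MunnElt P) (h : b.f = a.e) (x z : E) :
    (comp a b h).mapsE x z ↔ ∃ y, b.mapsE x y ∧ a.mapsE y z := by
  constructor
  · rintro ⟨hx, rfl⟩
    refine ⟨(b.θ ⟨x, hx⟩).1, ⟨hx, rfl⟩, h ▸ (b.θ ⟨x, hx⟩).2, ?_⟩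
    rfl
  · rintro ⟨y, ⟨h1, v1⟩, ⟨h2, v2⟩⟩
    refine ⟨h1, ?_⟩
    show (a.θ ((dCongr h) (b.θ ⟨x, h1⟩))).1 = z
    have : (dCongr h) (b.θ ⟨x, h1⟩) = ⟨y, h2⟩ := Subtype.ext v1
    rw [this]
    exact v2

theorem mul_maps (a b : MunnElt P) (x z : X) :
    (mul' a b).maps x z ↔ ∃ y, b.maps x y ∧ a.maps y z := by
  unfold mul'
  refine (comp_maps _ _ _ x z).trans ?_
  constructor
  · rintro ⟨y, hb, ha⟩
    rw [restrict_maps] at hb ha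
    exact ⟨y, hb.1, ha.1⟩
  · rintro ⟨y, ⟨h1, v1⟩, ⟨h2, v2⟩⟩
    have hyf : sle (P.p y) b.f := v1 ▸ (b.α ⟨x, h1⟩).2
    have hyg : sle (P.p y) (b.f * a.e) := sle_mul' hyf h2
    refine ⟨y, ?_, ?_⟩
    · rw [restrict_maps]
      refine ⟨⟨h1, v1⟩, ?_⟩
      -- sle (P.p x) (b.θ.symm ⟨b.f * a.e, _⟩).1
      refine (b.θ_ord ⟨P.p x, h1⟩ (b.θ.symm ⟨b.f * a.e, sle_mul_left' _ _⟩)).2 ?_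
      rw [b.θ.apply_symm_apply]
      have hc : (b.θ ⟨P.p x, h1⟩).1 = P.p y := by
        rw [← b.compat ⟨x, h1⟩, v1]
      rw [hc]
      exact hyg
    · rw [restrict_maps]
      exact ⟨⟨h2, v2⟩, hyg⟩

theorem mul_mapsE (a b : MunnElt P) (x z : E) :
    (mul' a b).mapsE x z ↔ ∃ y, b.mapsE x y ∧ a.mapsE y z := by
  unfold mul'
  refine (comp_mapsE _ _ _ x z).trans ?_
  constructor
  · rintro ⟨y, hb, ha⟩
    rw [restrict_mapsE] at hb ha
    exact ⟨y, hb.1, ha.1⟩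
  · rintro ⟨y, ⟨h1, v1⟩, ⟨h2, v2⟩⟩
    have hyf : sle y b.f := v1 ▸ (b.θ ⟨x, h1⟩).2
    have hyg : sle y (b.f * a.e) := sle_mul' hyf h2
    refine ⟨y, ?_, ?_⟩
    · rw [restrict_mapsE]
      refine ⟨⟨h1, v1⟩, ?_⟩
      refine (b.θ_ord ⟨x, h1⟩ (b.θ.symm ⟨b.f * a.e, sle_mul_left' _ _⟩)).2 ?_
      rw [b.θ.apply_symm_apply, v1]
      exact hyg
    · rw [restrict_mapsE]
      exact ⟨⟨h2, v2⟩, hyg⟩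

theorem inv_maps (t : MunnElt P) (x y : X) :
    (inv' t).maps x y ↔ t.maps y x := by
  constructor
  · rintro ⟨h, rfl⟩
    refine ⟨(t.α.symm ⟨x, h⟩).2, ?_⟩
    show (t.α (t.α.symm ⟨x, h⟩)).1 = x
    rw [t.α.apply_symm_apply]
  · rintro ⟨h, rfl⟩
    refine ⟨(t.α ⟨y, h⟩).2, ?_⟩
    show (t.α.symm (t.α ⟨y, h⟩)).1 = y
    rw [t.α.symm_apply_apply]

theorem inv_mapsE (t : MunnElt P) (a b : E) :
    (inv' t).mapsE a b ↔ t.mapsE b a := by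
  constructor
  · rintro ⟨h, rfl⟩
    refine ⟨(t.θ.symm ⟨a, h⟩).2, ?_⟩
    show (t.θ (t.θ.symm ⟨a, h⟩)).1 = a
    rw [t.θ.apply_symm_apply]
  · rintro ⟨h, rfl⟩
    refine ⟨(t.θ ⟨b, h⟩).2, ?_⟩
    show (t.θ.symm (t.θ ⟨b, h⟩)).1 = b
    rw [t.θ.symm_apply_apply]

end MunnElt
/-- the generalised Munn semigroup `T_X` of a presheaf `(X, E, p)` is an
inverse semigroup: `X·e ∩ X·f = X·ef`, multiplication is composition of restrictions to
intersections of principal subpresheaves, the inverse of `(α, θ)` is `(α⁻¹, θ⁻¹)`, and the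
idempotents are exactly the pairs `(id_{X·e}, id_{e↓})` for `e ∈ E`. -/
theorem munn_inverse_semigroup {X E : Type*} [MeetSL E] (P : SPresheaf X E) :
    (∀ e f : E,
      {x : X | sle (P.p x) e} ∩ {x : X | sle (P.p x) f} = {x : X | sle (P.p x) (e * f)}) ∧
    ∃ (mul : MunnElt P → MunnElt P → MunnElt P) (inv : MunnElt P → MunnElt P),
      IsMunnMul mul ∧ IsMunnInv inv ∧
      (∀ a b c : MunnElt P, mul (mul a b) c = mul a (mul b c)) ∧
      (∀ a : MunnElt P, mul (mul a (inv a)) a = a) ∧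
      (∀ a : MunnElt P, mul (mul (inv a) a) (inv a) = inv a) ∧
      (∀ a b : MunnElt P, mul (mul a b) a = a → mul (mul b a) b = b → b = inv a) ∧
      (∀ t : MunnElt P, mul t t = t ↔
        (t.e = t.f ∧ (∀ x : P.sub t.e, ((t.α x).1 : X) = x.1) ∧
          (∀ a : dOn E t.e, ((t.θ a).1 : E) = a.1))) := by
  constructor
  · intro e f
    ext x
    simp only [Set.mem_inter_iff, Set.mem_setOf_eq]
    exact ⟨fun ⟨h1, h2⟩ => sle_mul' h1 h2,
      fun h => ⟨sle_trans' h (sle_mul_left' e f), sle_trans' h (sle_mul_right' e f)⟩⟩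
  · refine ⟨MunnElt.mul', MunnElt.inv',
      fun a b => ⟨MunnElt.mul_maps a b, MunnElt.mul_mapsE a b⟩,
      fun t => ⟨MunnElt.inv_maps t, MunnElt.inv_mapsE t⟩, ?_, ?_, ?_, ?_, ?_⟩
    -- associativity
    · intro a b c
      apply MunnElt.ext_graph
      · intro x w
        simp only [MunnElt.mul_maps]
        constructor
        · rintro ⟨y, hc, z, hb, ha⟩
          exact ⟨z, ⟨y, hc, hb⟩, ha⟩
        · rintro ⟨z, ⟨y, hc, hb⟩, ha⟩
          exact ⟨y, hc, z, hb, ha⟩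
      · intro x w
        simp only [MunnElt.mul_mapsE]
        constructor
        · rintro ⟨y, hc, z, hb, ha⟩
          exact ⟨z, ⟨y, hc, hb⟩, ha⟩
        · rintro ⟨z, ⟨y, hc, hb⟩, ha⟩
          exact ⟨y, hc, z, hb, ha⟩
    -- a a⁻¹ a = a
    · intro a
      apply MunnElt.ext_graph
      · intro x w
        simp only [MunnElt.mul_maps, MunnElt.inv_maps]
        constructor
        · rintro ⟨y, ha1, z, ha2, ha3⟩
          have hxz : x = z := MunnElt.maps_inj ha1 ha2
          subst hxz
          exact ha3
        · rintro ⟨hx, hv⟩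
          exact ⟨(a.α ⟨x, hx⟩).1, ⟨hx, rfl⟩, x, ⟨hx, rfl⟩, ⟨hx, hv⟩⟩
      · intro x w
        simp only [MunnElt.mul_mapsE, MunnElt.inv_mapsE]
        constructor
        · rintro ⟨y, ha1, z, ha2, ha3⟩
          have hxz : x = z := MunnElt.mapsE_inj ha1 ha2
          subst hxz
          exact ha3
        · rintro ⟨hx, hv⟩
          exact ⟨(a.θ ⟨x, hx⟩).1, ⟨hx, rfl⟩, x, ⟨hx, rfl⟩, ⟨hx, hv⟩⟩
    -- a⁻¹ a a⁻¹ = a⁻¹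
    · intro a
      apply MunnElt.ext_graph
      · intro x w
        simp only [MunnElt.mul_maps, MunnElt.inv_maps]
        constructor
        · rintro ⟨y, ha1, z, ha2, ha3⟩
          have hxz : x = z := MunnElt.maps_fun ha1 ha2
          subst hxz
          exact ha3
        · intro h
          obtain ⟨hw, hv⟩ := h
          exact ⟨w, ⟨hw, hv⟩, (a.α ⟨w, hw⟩).1, ⟨hw, rfl⟩, ⟨hw, rfl⟩⟩
      · intro x w
        simp only [MunnElt.mul_mapsE, MunnElt.inv_mapsE]
        constructor
        · rintro ⟨y, ha1, z, ha2, ha3⟩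
          have hxz : x = z := MunnElt.mapsE_fun ha1 ha2
          subst hxz
          exact ha3
        · intro h
          obtain ⟨hw, hv⟩ := h
          exact ⟨w, ⟨hw, hv⟩, (a.θ ⟨w, hw⟩).1, ⟨hw, rfl⟩, ⟨hw, rfl⟩⟩
    -- uniqueness of inverses
    · intro a b h1 h2
      have H1 : ∀ x w, a.maps x w → b.maps w x := by
        intro x w hxw
        have hg : (MunnElt.mul' (MunnElt.mul' a b) a).maps x w := by rw [h1]; exact hxw
        rw [MunnElt.mul_maps] at hg
        obtain ⟨y, hay, hg2⟩ := hg
        rw [MunnElt.mul_maps] at hg2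
        obtain ⟨z, hbz, haz⟩ := hg2
        have hyw : y = w := MunnElt.maps_fun hay hxw
        subst hyw
        have hzx : z = x := MunnElt.maps_inj haz hxw
        subst hzx
        exact hbz
      have H2 : ∀ x w, b.maps x w → a.maps w x := by
        intro x w hxw
        have hg : (MunnElt.mul' (MunnElt.mul' b a) b).maps x w := by rw [h2]; exact hxw
        rw [MunnElt.mul_maps] at hg
        obtain ⟨y, hay, hg2⟩ := hg
        rw [MunnElt.mul_maps] at hg2
        obtain ⟨z, hbz, haz⟩ := hg2
        have hyw : y = w := MunnElt.maps_fun hay hxw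
        subst hyw
        have hzx : z = x := MunnElt.maps_inj haz hxw
        subst hzx
        exact hbz
      have H1E : ∀ x w, a.mapsE x w → b.mapsE w x := by
        intro x w hxw
        have hg : (MunnElt.mul' (MunnElt.mul' a b) a).mapsE x w := by rw [h1]; exact hxw
        rw [MunnElt.mul_mapsE] at hg
        obtain ⟨y, hay, hg2⟩ := hg
        rw [MunnElt.mul_mapsE] at hg2
        obtain ⟨z, hbz, haz⟩ := hg2
        have hyw : y = w := MunnElt.mapsE_fun hay hxw
        subst hyw
        have hzx : z = x := MunnElt.mapsE_inj haz hxw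
        subst hzx
        exact hbz
      have H2E : ∀ x w, b.mapsE x w → a.mapsE w x := by
        intro x w hxw
        have hg : (MunnElt.mul' (MunnElt.mul' b a) b).mapsE x w := by rw [h2]; exact hxw
        rw [MunnElt.mul_mapsE] at hg
        obtain ⟨y, hay, hg2⟩ := hg
        rw [MunnElt.mul_mapsE] at hg2
        obtain ⟨z, hbz, haz⟩ := hg2
        have hyw : y = w := MunnElt.mapsE_fun hay hxw
        subst hyw
        have hzx : z = x := MunnElt.mapsE_inj haz hxw
        subst hzx
        exact hbz
      apply MunnElt.ext_graph
      · intro x y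
        rw [MunnElt.inv_maps]
        exact ⟨fun h => H2 x y h, fun h => H1 y x h⟩
      · intro x y
        rw [MunnElt.inv_mapsE]
        exact ⟨fun h => H2E x y h, fun h => H1E y x h⟩
    -- idempotents
    · intro t
      constructor
      · intro htt
        have hθv : ∀ a : dOn E t.e, ((t.θ a).1 : E) = a.1 := by
          intro a
          have h0 : t.mapsE a.1 (t.θ a).1 := ⟨a.2, rfl⟩
          have hg : (MunnElt.mul' t t).mapsE a.1 (t.θ a).1 := by rw [htt]; exact h0
          rw [MunnElt.mul_mapsE] at hg
          obtain ⟨m, hm1, hm2⟩ := hg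
          have hmb : m = (t.θ a).1 := MunnElt.mapsE_fun hm1 h0
          subst hmb
          exact MunnElt.mapsE_inj hm2 h0
        have hαv : ∀ x : P.sub t.e, ((t.α x).1 : X) = x.1 := by
          intro x
          have h0 : t.maps x.1 (t.α x).1 := ⟨x.2, rfl⟩
          have hg : (MunnElt.mul' t t).maps x.1 (t.α x).1 := by rw [htt]; exact h0
          rw [MunnElt.mul_maps] at hg
          obtain ⟨m, hm1, hm2⟩ := hg
          have hmb : m = (t.α x).1 := MunnElt.maps_fun hm1 h0
          subst hmb
          exact MunnElt.maps_inj hm2 h0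
        have he : t.e = t.f := by
          rw [← MunnElt.theta_top t]
          exact (hθv ⟨t.e, sle_refl' _⟩).symm
        exact ⟨he, hαv, hθv⟩
      · rintro ⟨he, hα, hθ⟩
        apply MunnElt.ext_graph
        · intro x z
          rw [MunnElt.mul_maps]
          constructor
          · rintro ⟨y, ⟨hy1, hy2⟩, hz⟩
            rw [hα ⟨x, hy1⟩] at hy2
            subst hy2
            exact hz
          · rintro ⟨hx, hv⟩
            exact ⟨x, ⟨hx, hα ⟨x, hx⟩⟩, ⟨hx, hv⟩⟩
        · intro x z
          rw [MunnElt.mul_mapsE]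
          constructor
          · rintro ⟨y, ⟨hy1, hy2⟩, hz⟩
            rw [hθ ⟨x, hy1⟩] at hy2
            subst hy2
            exact hz
          · rintro ⟨hx, hv⟩
            exact ⟨x, ⟨hx, hθ ⟨x, hx⟩⟩, ⟨hx, hv⟩⟩
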